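/- Let f : ℝ^d → ℝ be differentiable, convex, and M-component-smooth with minimizer w⋆ and minimum value f⋆, let S be a nonvacuous and proper random subset of [d] with sketch C = I_S P⁻¹, let η have conditional law N(0, σ_S² I_d) given S, and take step sizes Γ = P M⁻¹. Then for every α ∈ (0,1) and every fixed θ ∈ ℝ^d, the step θ⁺ = θ − Γ C(∇f(θ) + η) satisfies E[f(θ⁺)] − f⋆ − (1−α)(f(θ) − f⋆) ≤ α( ‖θ − w⋆‖_{Γ⁻¹}² − E[‖θ⁺ − w⋆‖_{Γ⁻¹}²] ) + ((2α+1)/2) · E[‖C σ_S 1‖_{P M⁻¹}²]. -/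

import Mathlib

open MeasureTheory ProbabilityTheory
open scoped NNReal ENNReal InnerProductSpace Real

/-- The law of `η` conditionally on `S = U`: coordinates i.i.d. `N(0, s²)` where `s = σ_U`. -/
noncomputable def gpi (d : ℕ) (s : ℝ) : Measure (Fin d → ℝ) :=
  Measure.pi fun _ => gaussianReal 0 (Real.toNNReal (s ^ 2))

/-- Expectation of `g(S, η)` where `S = U` with probability `q U` and,
conditionally on `S = U`, `η ~ N(0, σ_U² I_d)`. -/
noncomputable def Exp {d : ℕ} (q σ : Finset (Fin d) → ℝ)
    (g : Finset (Fin d) → (Fin d → ℝ) → ℝ) : ℝ :=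
  ∑ U : Finset (Fin d), q U * ∫ y, g U y ∂(gpi d (σ U))

section Helpers

open Real
open scoped NNReal ENNReal InnerProductSpace


lemma osp_integral_id_mul_exp {b : ℝ} (hb : 0 < b) :
    ∫ x : ℝ, x * Real.exp (-b * x ^ 2) = 0 := by
  have hderiv : ∀ x : ℝ, HasDerivAt (fun x : ℝ => -Real.exp (-b * x ^ 2) / (2 * b))
      (x * Real.exp (-b * x ^ 2)) x := by
    intro x
    have h := (((hasDerivAt_pow 2 x).const_mul (-b)).exp).neg.div_const (2 * b)
    refine h.congr_deriv ?_
    push_cast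
    field_simp
  exact integral_eq_zero_of_hasDerivAt_of_integrable hderiv
    (integrable_mul_exp_neg_mul_sq hb)
    (((integrable_exp_neg_mul_sq hb).neg).div_const _)

lemma osp_integrable_sq_mul_exp {b : ℝ} (hb : 0 < b) :
    Integrable fun x : ℝ => x ^ 2 * Real.exp (-b * x ^ 2) := by
  have := integrable_rpow_mul_exp_neg_mul_sq hb (s := 2) (by norm_num)
  simpa [Real.rpow_natCast] using this

lemma osp_integral_sq_mul_exp {b : ℝ} (hb : 0 < b) :
    ∫ x : ℝ, x ^ 2 * Real.exp (-b * x ^ 2) = Real.sqrt (π / b) / (2 * b) := by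
  have hderiv : ∀ x : ℝ, HasDerivAt (fun x : ℝ => -(x * Real.exp (-b * x ^ 2)) / (2 * b))
      (x ^ 2 * Real.exp (-b * x ^ 2) - Real.exp (-b * x ^ 2) / (2 * b)) x := by
    intro x
    have h := ((hasDerivAt_id x).mul (((hasDerivAt_pow 2 x).const_mul (-b)).exp)).neg.div_const
      (2 * b)
    refine h.congr_deriv ?_
    push_cast
    simp only [id]
    field_simp
    ring
  have hzero := integral_eq_zero_of_hasDerivAt_of_integrable hderiv
    ((osp_integrable_sq_mul_exp hb).sub ((integrable_exp_neg_mul_sq hb).div_const _))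
    (((integrable_mul_exp_neg_mul_sq hb).neg).div_const _)
  rw [integral_sub (osp_integrable_sq_mul_exp hb) ((integrable_exp_neg_mul_sq hb).div_const _)]
    at hzero
  rw [integral_div, integral_gaussian b] at hzero
  linarith

lemma osp_gpdf_eq (v : ℝ≥0) (hv : v ≠ 0) (x : ℝ) :
    gaussianPDFReal 0 v x = (Real.sqrt (2 * π * v))⁻¹ * Real.exp (-(2 * (v:ℝ))⁻¹ * x ^ 2) := by
  rw [gaussianPDFReal]
  congr 1
  rw [sub_zero]
  have : (v:ℝ) ≠ 0 := by exact_mod_cast hv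
  field_simp

lemma osp_hb_pos (v : ℝ≥0) (hv : v ≠ 0) : 0 < (2 * (v:ℝ))⁻¹ := by
  have h : (0:ℝ) < v := lt_of_le_of_ne v.coe_nonneg (by exact_mod_cast (Ne.symm hv))
  exact inv_pos.mpr (by positivity)

lemma osp_intble_dirac (f : ℝ → ℝ) (hf : StronglyMeasurable f) (a : ℝ) :
    Integrable f (Measure.dirac a) := by
  refine ⟨hf.aestronglyMeasurable, ?_⟩
  rw [HasFiniteIntegral, lintegral_dirac]
  exact ENNReal.coe_lt_top

lemma osp_gauss_repr (v : ℝ≥0) (g : ℝ → ℝ) (hv : v ≠ 0) :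
    ∫ x, g x ∂(gaussianReal 0 v) =
      ∫ x, (Real.sqrt (2 * π * v))⁻¹ * (g x * Real.exp (-(2 * (v:ℝ))⁻¹ * x ^ 2)) := by
  rw [gaussianReal_of_var_ne_zero _ hv]
  have hrepr : gaussianPDF 0 v = fun x => ((Real.toNNReal (gaussianPDFReal 0 v x) : ℝ≥0) : ℝ≥0∞) :=
    rfl
  rw [hrepr, integral_withDensity_eq_integral_smul
    ((measurable_gaussianPDFReal 0 v).real_toNNReal)]
  congr 1
  ext x
  rw [NNReal.smul_def, smul_eq_mul, Real.coe_toNNReal _ (gaussianPDFReal_nonneg _ _ _),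
    osp_gpdf_eq v hv]
  ring

lemma osp_integrable_id_gaussian (v : ℝ≥0) :
    Integrable (fun x : ℝ => x) (gaussianReal 0 v) := by
  by_cases hv : v = 0
  · rw [hv, gaussianReal_zero_var]
    exact osp_intble_dirac _ (stronglyMeasurable_id) _
  · rw [gaussianReal_of_var_ne_zero _ hv]
    rw [integrable_withDensity_iff (measurable_gaussianPDF _ _)
      (Filter.Eventually.of_forall fun x => ENNReal.ofReal_lt_top)]
    have hb : 0 < (2 * (v:ℝ))⁻¹ := osp_hb_pos v hv
    have : (fun x : ℝ => x * (gaussianPDF 0 v x).toReal) =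
        fun x => (Real.sqrt (2 * π * v))⁻¹ * (x * Real.exp (-(2 * (v:ℝ))⁻¹ * x ^ 2)) := by
      ext x
      rw [gaussianPDF, ENNReal.toReal_ofReal (gaussianPDFReal_nonneg _ _ _), osp_gpdf_eq v hv]
      ring
    rw [this]
    exact (integrable_mul_exp_neg_mul_sq hb).const_mul _

lemma osp_integrable_sq_gaussian (v : ℝ≥0) :
    Integrable (fun x : ℝ => x ^ 2) (gaussianReal 0 v) := by
  by_cases hv : v = 0
  · rw [hv, gaussianReal_zero_var]
    exact osp_intble_dirac _ ((measurable_id'.pow_const 2).stronglyMeasurable) _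
  · rw [gaussianReal_of_var_ne_zero _ hv]
    rw [integrable_withDensity_iff (measurable_gaussianPDF _ _)
      (Filter.Eventually.of_forall fun x => ENNReal.ofReal_lt_top)]
    have hb : 0 < (2 * (v:ℝ))⁻¹ := osp_hb_pos v hv
    have : (fun x : ℝ => x ^ 2 * (gaussianPDF 0 v x).toReal) =
        fun x => (Real.sqrt (2 * π * v))⁻¹ * (x ^ 2 * Real.exp (-(2 * (v:ℝ))⁻¹ * x ^ 2)) := by
      ext x
      rw [gaussianPDF, ENNReal.toReal_ofReal (gaussianPDFReal_nonneg _ _ _), osp_gpdf_eq v hv]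
      ring
    rw [this]
    exact (osp_integrable_sq_mul_exp hb).const_mul _

lemma osp_integral_id_gaussian (v : ℝ≥0) : ∫ x, x ∂(gaussianReal 0 v) = 0 := by
  by_cases hv : v = 0
  · rw [hv, gaussianReal_zero_var, integral_dirac]
  · rw [osp_gauss_repr v _ hv]
    have hb : 0 < (2 * (v:ℝ))⁻¹ := osp_hb_pos v hv
    rw [integral_const_mul, osp_integral_id_mul_exp hb, mul_zero]

lemma osp_integral_sq_gaussian (v : ℝ≥0) : ∫ x, x ^ 2 ∂(gaussianReal 0 v) = (v : ℝ) := by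
  by_cases hv : v = 0
  · rw [hv, gaussianReal_zero_var, integral_dirac]
    norm_num
  · rw [osp_gauss_repr v _ hv]
    have hvpos : (0:ℝ) < v := lt_of_le_of_ne v.coe_nonneg (by exact_mod_cast (Ne.symm hv))
    have hb : 0 < (2 * (v:ℝ))⁻¹ := osp_hb_pos v hv
    rw [integral_const_mul, osp_integral_sq_mul_exp hb]
    have h1 : π / (2 * (v:ℝ))⁻¹ = 2 * π * v := by field_simp
    have h2 : (2 * ((2 * (v:ℝ))⁻¹)) = (v:ℝ)⁻¹ := by field_simp
    rw [h1, h2]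
    have h3 : Real.sqrt (2 * π * v) ≠ 0 := by
      refine ne_of_gt (Real.sqrt_pos.mpr ?_)
      positivity
    field_simp

instance (d : ℕ) (s : ℝ) : IsProbabilityMeasure (gpi d s) := by rw [gpi]; infer_instance

lemma osp_map_eval_pi {d : ℕ} (μ : Fin d → Measure ℝ) [∀ i, IsProbabilityMeasure (μ i)]
    (i : Fin d) : (Measure.pi μ).map (Function.eval i) = μ i := by
  ext s hs
  rw [Measure.map_apply (measurable_pi_apply i) hs]
  have hpre : (Function.eval i ⁻¹' s) =
      Set.pi Set.univ (Function.update (fun _ : Fin d => (Set.univ : Set ℝ)) i s) := by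
    ext y
    simp only [Set.mem_preimage, Set.mem_pi, Set.mem_univ, true_implies,
      Function.update_apply, Function.eval]
    constructor
    · intro h j
      split_ifs with hji
      · subst hji; exact h
      · exact Set.mem_univ _
    · intro h
      simpa using h i
  rw [hpre, Measure.pi_pi]
  rw [Fintype.prod_eq_single i (fun j hj => by simp [Function.update_apply, hj])]
  simp

lemma osp_integral_eval {d : ℕ} (s : ℝ) (h : ℝ → ℝ)
    (hm : AEStronglyMeasurable h (gaussianReal 0 (Real.toNNReal (s ^ 2)))) (i : Fin d) :
    ∫ y, h (y i) ∂(gpi d s) = ∫ x, h x ∂(gaussianReal 0 (Real.toNNReal (s ^ 2))) := by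
  rw [gpi]
  conv_rhs => rw [← osp_map_eval_pi (fun _ : Fin d => gaussianReal 0 (Real.toNNReal (s ^ 2))) i]
  exact (integral_map (measurable_pi_apply i).aemeasurable
    (by rwa [osp_map_eval_pi])).symm

lemma osp_integrable_eval {d : ℕ} (s : ℝ) (h : ℝ → ℝ)
    (hm : AEStronglyMeasurable h (gaussianReal 0 (Real.toNNReal (s ^ 2))))
    (hi : Integrable h (gaussianReal 0 (Real.toNNReal (s ^ 2)))) (i : Fin d) :
    Integrable (fun y => h (y i)) (gpi d s) := by
  rw [gpi]
  have := (integrable_map_measure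
    (by rwa [osp_map_eval_pi (fun _ : Fin d => gaussianReal 0 (Real.toNNReal (s ^ 2))) i])
    (measurable_pi_apply i).aemeasurable).mp
    (by rwa [osp_map_eval_pi (fun _ : Fin d => gaussianReal 0 (Real.toNNReal (s ^ 2))) i])
  exact this

/-- quadratic function -/
def osp_quad (a b c : ℝ) : ℝ → ℝ := fun x => a + b * x + c * x ^ 2

lemma osp_quad_meas (a b c : ℝ) : StronglyMeasurable (osp_quad a b c) := by
  unfold osp_quad
  exact ((measurable_const.add (measurable_id'.const_mul b)).add
    ((measurable_id'.pow_const 2).const_mul c)).stronglyMeasurable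

lemma osp_integrable_quad (v : ℝ≥0) (a b c : ℝ) :
    Integrable (osp_quad a b c) (gaussianReal 0 v) := by
  unfold osp_quad
  exact ((integrable_const a).add ((osp_integrable_id_gaussian v).const_mul b)).add
    ((osp_integrable_sq_gaussian v).const_mul c)

lemma osp_integral_quad (v : ℝ≥0) (a b c : ℝ) :
    ∫ x, osp_quad a b c x ∂(gaussianReal 0 v) = a + c * v := by
  unfold osp_quad
  have h1 : ∫ x, (a + b * x + c * x ^ 2) ∂(gaussianReal 0 v)
      = (∫ x, (a + b * x) ∂(gaussianReal 0 v)) + ∫ x, c * x ^ 2 ∂(gaussianReal 0 v) :=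
    integral_add ((integrable_const a).add ((osp_integrable_id_gaussian v).const_mul b))
      ((osp_integrable_sq_gaussian v).const_mul c)
  have h2 : ∫ x, (a + b * x) ∂(gaussianReal 0 v)
      = (∫ _x : ℝ, a ∂(gaussianReal 0 v)) + ∫ x, b * x ∂(gaussianReal 0 v) :=
    integral_add (integrable_const a) ((osp_integrable_id_gaussian v).const_mul b)
  rw [h1, h2, integral_const, integral_const_mul, integral_const_mul, osp_integral_id_gaussian,
    osp_integral_sq_gaussian]
  simp

lemma osp_integrable_quad_eval {d : ℕ} (s : ℝ) (a b c : ℝ) (i : Fin d) :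
    Integrable (fun y => osp_quad a b c (y i)) (gpi d s) :=
  osp_integrable_eval s _ (osp_quad_meas a b c).aestronglyMeasurable
    (osp_integrable_quad _ a b c) i

lemma osp_integral_quad_eval {d : ℕ} (s : ℝ) (a b c : ℝ) (i : Fin d) :
    ∫ y, osp_quad a b c (y i) ∂(gpi d s) = a + c * s ^ 2 := by
  rw [osp_integral_eval s _ (osp_quad_meas a b c).aestronglyMeasurable i, osp_integral_quad]
  rw [Real.coe_toNNReal _ (sq_nonneg s)]

lemma osp_integrable_sum_quad {d : ℕ} (s : ℝ) (a b c : Fin d → ℝ) :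
    Integrable (fun y => ∑ j : Fin d, osp_quad (a j) (b j) (c j) (y j)) (gpi d s) :=
  integrable_finset_sum _ fun j _ => osp_integrable_quad_eval s _ _ _ j

lemma osp_integral_sum_quad {d : ℕ} (s : ℝ) (a b c : Fin d → ℝ) :
    ∫ y, (∑ j : Fin d, osp_quad (a j) (b j) (c j) (y j)) ∂(gpi d s)
      = ∑ j : Fin d, (a j + c j * s ^ 2) := by
  rw [integral_finset_sum _ fun j _ => osp_integrable_quad_eval s _ _ _ j]
  exact Finset.sum_congr rfl fun j _ => osp_integral_quad_eval s _ _ _ j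

lemma osp_convex_tangent {E : Type*} [NormedAddCommGroup E] [InnerProductSpace ℝ E]
    [CompleteSpace E] {f : E → ℝ} {g x : E} (hconv : ConvexOn ℝ Set.univ f)
    (hg : HasGradientAt f g x) (w : E) : f x + ⟪g, w - x⟫_ℝ ≤ f w := by
  have hF : HasFDerivAt f (InnerProductSpace.toDual ℝ E g) x :=
    hasGradientAt_iff_hasFDerivAt.mp hg
  set φ : ℝ → ℝ := fun t => f (x + t • (w - x)) with hφ
  have hc : HasDerivAt φ ⟪g, w - x⟫_ℝ 0 := by
    have hF' : HasFDerivAt f (InnerProductSpace.toDual ℝ E g) ((0:ℝ) • (w - x) + x) := by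
      simpa using hF
    have hψ' : HasDerivAt (fun t : ℝ => t • (w - x) + x) (w - x) 0 := by
      simpa using ((hasDerivAt_id (0 : ℝ)).smul_const (w - x)).add_const x
    have hcomp := hF'.comp_hasDerivAt 0 hψ'
    have : φ = f ∘ fun t : ℝ => t • (w - x) + x := by
      funext t; simp [hφ, add_comm]
    rw [this]
    simpa using hcomp
  have hslope : ∀ t ∈ Set.Ioc (0 : ℝ) 1, (φ t - φ 0) / t ≤ f w - f x := by
    intro t ht
    have key : φ t ≤ (1 - t) * f x + t * f w := by
      have hxt : x + t • (w - x) = (1 - t) • x + t • w := by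
        module
      rw [hφ]; simp only []
      rw [hxt]
      exact hconv.2 (Set.mem_univ x) (Set.mem_univ w) (by linarith [ht.2]) (le_of_lt ht.1)
        (by ring)
    have hφ0 : φ 0 = f x := by simp [hφ]
    rw [div_le_iff₀ ht.1, hφ0]
    nlinarith [key]
  have htends : Filter.Tendsto (fun t => (φ t - φ 0) / t) (nhdsWithin 0 (Set.Ioi 0))
      (nhds ⟪g, w - x⟫_ℝ) := by
    have h1 := hasDerivAt_iff_tendsto_slope.mp hc
    have h2 := h1.mono_left (nhdsWithin_mono 0 fun t (ht : t ∈ Set.Ioi 0) =>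
      (Set.mem_compl_singleton_iff).mpr (ne_of_gt ht))
    refine h2.congr' ?_
    filter_upwards with t
    simp [slope_def_field, div_eq_inv_mul]
  have hmem : Set.Ioc (0:ℝ) 1 ∈ nhdsWithin (0:ℝ) (Set.Ioi 0) :=
    Ioc_mem_nhdsGT_of_mem (by simp : (0:ℝ) ∈ Set.Ico (0:ℝ) 1)
  have hle := le_of_tendsto htends (Filter.eventually_iff_exists_mem.mpr
    ⟨Set.Ioc 0 1, hmem, hslope⟩)
  have hφ0 : φ 0 = f x := by simp [hφ]
  linarith

lemma osp_grad_zero_of_min {E : Type*} [NormedAddCommGroup E] [InnerProductSpace ℝ E]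
    [CompleteSpace E] {f : E → ℝ} {g x : E} (hg : HasGradientAt f g x)
    (hmin : ∀ w, f x ≤ f w) : g = 0 := by
  have hF : HasFDerivAt f (InnerProductSpace.toDual ℝ E g) x :=
    hasGradientAt_iff_hasFDerivAt.mp hg
  have hloc : IsLocalMin f x := Filter.Eventually.of_forall fun w => hmin w
  have hz := hloc.hasFDerivAt_eq_zero hF
  have h0 : InnerProductSpace.toDual ℝ E g = InnerProductSpace.toDual ℝ E 0 := by
    simpa using hz
  exact (InnerProductSpace.toDual ℝ E).injective h0

lemma osp_qid2 (Mj pj g yy th w : ℝ) (hM : Mj ≠ 0) (hp : pj ≠ 0) :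
    Mj / pj * ((th - pj / Mj * ((g + yy) / pj)) - w) ^ 2
      = ((Mj / pj) * (th - w) ^ 2 + (-(2 * (th - w) * g / pj) + g ^ 2 / (pj * Mj)))
        + (-(2 * (th - w) / pj) + 2 * g / (pj * Mj)) * yy + 1 / (pj * Mj) * yy ^ 2 := by
  field_simp
  ring

lemma osp_swap_sum {d : ℕ} (q : Finset (Fin d) → ℝ) (x : Fin d → ℝ) :
    ∑ U : Finset (Fin d), q U * ∑ j : Fin d, (if j ∈ U then x j else 0)
      = ∑ j : Fin d, (∑ U : Finset (Fin d), if j ∈ U then q U else 0) * x j := by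
  simp_rw [Finset.mul_sum]
  rw [Finset.sum_comm]
  refine Finset.sum_congr rfl fun j _ => ?_
  rw [Finset.sum_mul]
  refine Finset.sum_congr rfl fun U _ => ?_
  by_cases h : j ∈ U <;> simp [h]

end Helpers

set_option maxHeartbeats 1000000 in
/-- One-step progress lemma with step sizes `Γ = P M⁻¹` (so `γ_j = p_j / M_j` and
`Γ⁻¹ = M P⁻¹`): for every `α ∈ (0,1)`,
`E[f(θ⁺)] − f⋆ − (1−α)(f(θ) − f⋆)
  ≤ α(‖θ − w⋆‖_{Γ⁻¹}² − E[‖θ⁺ − w⋆‖_{Γ⁻¹}²]) + ((2α+1)/2) E[‖C σ_S 1‖_{P M⁻¹}²]`. -/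
theorem one_step_progress
    (d : ℕ) (hd : 1 ≤ d)
    (f : EuclideanSpace ℝ (Fin d) → ℝ)
    (gradf : EuclideanSpace ℝ (Fin d) → EuclideanSpace ℝ (Fin d))
    (hdiff : ∀ x, HasGradientAt f (gradf x) x)
    (hconv : ConvexOn ℝ Set.univ f)
    (M : Fin d → ℝ) (hM : ∀ j, 0 < M j)
    (hsmooth : ∀ v w : EuclideanSpace ℝ (Fin d),
      f w ≤ f v + (∑ j : Fin d, gradf v j * (w j - v j))
        + (1 / 2) * ∑ j : Fin d, M j * (w j - v j) ^ 2)
    (wstar : EuclideanSpace ℝ (Fin d)) (hmin : ∀ w, f wstar ≤ f w)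
    (q : Finset (Fin d) → ℝ) (hq0 : ∀ U, 0 ≤ q U) (hq1 : ∑ U : Finset (Fin d), q U = 1)
    (hempty : q ∅ = 0)
    (p : Fin d → ℝ)
    (hpdef : ∀ j, p j = ∑ U : Finset (Fin d), if j ∈ U then q U else 0)
    (hp : ∀ j, 0 < p j)
    (σ : Finset (Fin d) → ℝ) (hσ : ∀ U, q U ≠ 0 → 0 < σ U)
    (α : ℝ) (hα : α ∈ Set.Ioo (0 : ℝ) 1)
    (θ : EuclideanSpace ℝ (Fin d)) :
    Exp q σ (fun U y =>
        f (WithLp.toLp 2 (fun j => θ j - (p j / M j) * (if j ∈ U then (gradf θ j + y j) / p j else 0))))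
      - f wstar - (1 - α) * (f θ - f wstar)
      ≤ α * ((∑ j : Fin d, (M j / p j) * (θ j - wstar j) ^ 2)
          - Exp q σ (fun U y => ∑ j : Fin d,
              (M j / p j) *
                ((θ j - (p j / M j) * (if j ∈ U then (gradf θ j + y j) / p j else 0))
                  - wstar j) ^ 2))
        + ((2 * α + 1) / 2) *
            ∑ U : Finset (Fin d), q U * ((σ U) ^ 2 * ∑ j ∈ U, 1 / (p j * M j)) := by
  have hM0 : ∀ j, M j ≠ 0 := fun j => ne_of_gt (hM j)
  have hp0 : ∀ j, p j ≠ 0 := fun j => ne_of_gt (hp j)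
  have hp1 : ∀ j, p j ≤ 1 := by
    intro j
    rw [hpdef j, ← hq1]
    refine Finset.sum_le_sum fun U _ => ?_
    by_cases h : j ∈ U <;> simp [h, hq0 U]
  -- scalar abbreviations
  set A : ℝ := ∑ j : Fin d, p j * (gradf θ j ^ 2 / M j) with hA_def
  set B : ℝ := ∑ j : Fin d, gradf θ j ^ 2 / M j with hB_def
  set T : ℝ := ∑ j : Fin d, gradf θ j * (θ j - wstar j) with hT_def
  have hA_nonneg : 0 ≤ A :=
    Finset.sum_nonneg fun j _ => mul_nonneg (hp j).le (div_nonneg (sq_nonneg _) (hM j).le)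
  have hB_nonneg : 0 ≤ B :=
    Finset.sum_nonneg fun j _ => div_nonneg (sq_nonneg _) (hM j).le
  have hΔ_nonneg : 0 ≤ f θ - f wstar := sub_nonneg.mpr (hmin θ)
  -- key inequality: f θ - f wstar ≤ T - B / 2
  have hKeyIneq : f θ - f wstar ≤ T - B / 2 := by
    have hgw : gradf wstar = 0 := osp_grad_zero_of_min (hdiff wstar) hmin
    set z : EuclideanSpace ℝ (Fin d) := WithLp.toLp 2 (fun j => wstar j + gradf θ j / M j) with hz
    have h1 : f z ≤ f wstar + B / 2 := by
      have h := hsmooth wstar z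
      have e1 : (∑ j : Fin d, gradf wstar j * (z j - wstar j)) = 0 := by
        rw [hgw]
        simp
      have e2 : (∑ j : Fin d, M j * (z j - wstar j) ^ 2) = B := by
        rw [hB_def]
        refine Finset.sum_congr rfl fun j _ => ?_
        have : z j - wstar j = gradf θ j / M j := by simp [hz]
        rw [this]
        field_simp [hM0 j]
      rw [e1, e2] at h
      linarith
    have h2 : f θ + (-T + B) ≤ f z := by
      have h := osp_convex_tangent hconv (hdiff θ) z
      have e3 : ⟪gradf θ, z - θ⟫_ℝ = -T + B := by
        rw [PiLp.inner_apply]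
        rw [hT_def, hB_def, neg_eq_neg_one_mul, Finset.mul_sum, ← Finset.sum_add_distrib]
        refine Finset.sum_congr rfl fun j _ => ?_
        simp only [RCLike.inner_apply, conj_trivial, PiLp.sub_apply]
        have : z j - θ j = (wstar j - θ j) + gradf θ j / M j := by simp [hz]; ring
        rw [this]
        field_simp [hM0 j]
        ring
      rw [e3] at h
      linarith
    linarith
  -- per-U bound for the function value integral
  have hfc : Continuous f :=
    continuous_iff_continuousAt.mpr fun x => (hdiff x).differentiableAt.continuousAt
  have hperU1 : ∀ U : Finset (Fin d),
      ∫ y, f (WithLp.toLp 2 (fun j => θ j - (p j / M j) * (if j ∈ U then (gradf θ j + y j) / p j else 0)))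
          ∂(gpi d (σ U))
        ≤ f θ + ∑ j : Fin d, ((if j ∈ U then -(gradf θ j ^ 2 / (2 * M j)) else 0)
            + (if j ∈ U then 1 / (2 * M j) else 0) * (σ U) ^ 2) := by
    intro U
    set s := σ U
    set A1 : Fin d → ℝ := fun j => if j ∈ U then -(gradf θ j ^ 2 / (2 * M j)) else 0 with hA1
    set C1 : Fin d → ℝ := fun j => if j ∈ U then 1 / (2 * M j) else 0 with hC1
    have hbound : ∀ y : Fin d → ℝ,
        f (WithLp.toLp 2 (fun j => θ j - (p j / M j) * (if j ∈ U then (gradf θ j + y j) / p j else 0)))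
          ≤ f θ + ∑ j : Fin d, osp_quad (A1 j) 0 (C1 j) (y j) := by
      intro y
      refine (hsmooth θ (WithLp.toLp 2 (fun j => θ j - (p j / M j) *
        (if j ∈ U then (gradf θ j + y j) / p j else 0)))).trans (le_of_eq ?_)
      rw [add_assoc, Finset.mul_sum, ← Finset.sum_add_distrib]
      congr 1
      refine Finset.sum_congr rfl fun j _ => ?_
      show gradf θ j * ((θ j - (p j / M j) * (if j ∈ U then (gradf θ j + y j) / p j else 0))
            - θ j)
          + 1 / 2 * (M j * ((θ j - (p j / M j) *
            (if j ∈ U then (gradf θ j + y j) / p j else 0)) - θ j) ^ 2)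
        = osp_quad (A1 j) 0 (C1 j) (y j)
      by_cases hj : j ∈ U
      · simp only [hA1, hC1, if_pos hj, osp_quad]
        field_simp [hp0 j, hM0 j]
        ring
      · simp only [hA1, hC1, if_neg hj, osp_quad]
        ring
    have hcontT : Continuous (fun y : Fin d → ℝ =>
        f (WithLp.toLp 2 (fun j => θ j - (p j / M j) * (if j ∈ U then (gradf θ j + y j) / p j else 0)))) := by
      refine hfc.comp ?_
      exact (PiLp.continuous_toLp 2 (fun _ : Fin d => ℝ)).comp
        (continuous_pi fun j => by
          by_cases hj : j ∈ U
          · simp only [if_pos hj]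
            exact continuous_const.sub (continuous_const.mul
              ((continuous_const.add (continuous_apply j)).div_const _))
          · simp only [if_neg hj]
            exact continuous_const.sub (continuous_const.mul continuous_const))
    have hint_bound : Integrable
        (fun y => f θ + ∑ j : Fin d, osp_quad (A1 j) 0 (C1 j) (y j)) (gpi d s) :=
      (integrable_const _).add (osp_integrable_sum_quad s _ _ _)
    have hintf : Integrable (fun y : Fin d → ℝ =>
        f (WithLp.toLp 2 (fun j => θ j - (p j / M j) * (if j ∈ U then (gradf θ j + y j) / p j else 0))))
        (gpi d s) := by
      refine Integrable.mono' ((integrable_const |f wstar|).add hint_bound.abs)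
        hcontT.aestronglyMeasurable ?_
      refine Filter.Eventually.of_forall fun y => ?_
      rw [Real.norm_eq_abs]
      simp only [Pi.add_apply]
      refine abs_le.mpr ⟨?_, ?_⟩
      · have := hmin (WithLp.toLp 2 (fun j => θ j - (p j / M j) *
          (if j ∈ U then (gradf θ j + y j) / p j else 0)))
        have h2 := neg_abs_le (f wstar)
        have h3 : 0 ≤ |f θ + ∑ j : Fin d, osp_quad (A1 j) 0 (C1 j) (y j)| := abs_nonneg _
        linarith
      · have := hbound y
        have h2 := le_abs_self (f θ + ∑ j : Fin d, osp_quad (A1 j) 0 (C1 j) (y j))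
        have h3 : 0 ≤ |f wstar| := abs_nonneg _
        linarith
    calc ∫ y, f (WithLp.toLp 2 (fun j => θ j - (p j / M j) *
          (if j ∈ U then (gradf θ j + y j) / p j else 0))) ∂(gpi d s)
        ≤ ∫ y, (f θ + ∑ j : Fin d, osp_quad (A1 j) 0 (C1 j) (y j)) ∂(gpi d s) :=
          integral_mono hintf hint_bound hbound
      _ = f θ + ∑ j : Fin d, (A1 j + C1 j * s ^ 2) := by
          rw [integral_add (integrable_const _) (osp_integrable_sum_quad s _ _ _),
            integral_const, osp_integral_sum_quad]
          simp
  -- per-U exact integral for the quadratic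
  have hperU2 : ∀ U : Finset (Fin d),
      ∫ y, (∑ j : Fin d, (M j / p j) *
          ((θ j - (p j / M j) * (if j ∈ U then (gradf θ j + y j) / p j else 0))
            - wstar j) ^ 2) ∂(gpi d (σ U))
        = ∑ j : Fin d, (((M j / p j) * (θ j - wstar j) ^ 2
            + (if j ∈ U then -(2 * (θ j - wstar j) * gradf θ j / p j)
                + gradf θ j ^ 2 / (p j * M j) else 0))
            + (if j ∈ U then 1 / (p j * M j) else 0) * (σ U) ^ 2) := by
    intro U
    set s := σ U
    set A2 : Fin d → ℝ := fun j => (M j / p j) * (θ j - wstar j) ^ 2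
      + (if j ∈ U then -(2 * (θ j - wstar j) * gradf θ j / p j)
          + gradf θ j ^ 2 / (p j * M j) else 0) with hA2
    set B2 : Fin d → ℝ := fun j => if j ∈ U then
        -(2 * (θ j - wstar j) / p j) + 2 * gradf θ j / (p j * M j) else 0 with hB2
    set C2 : Fin d → ℝ := fun j => if j ∈ U then 1 / (p j * M j) else 0 with hC2
    have hptw : ∀ y : Fin d → ℝ, (∑ j : Fin d, (M j / p j) *
        ((θ j - (p j / M j) * (if j ∈ U then (gradf θ j + y j) / p j else 0))
          - wstar j) ^ 2)
        = ∑ j : Fin d, osp_quad (A2 j) (B2 j) (C2 j) (y j) := by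
      intro y
      refine Finset.sum_congr rfl fun j _ => ?_
      by_cases hj : j ∈ U
      · simp only [hA2, hB2, hC2, if_pos hj, osp_quad]
        exact osp_qid2 (M j) (p j) (gradf θ j) (y j) (θ j) (wstar j) (hM0 j) (hp0 j)
      · simp only [hA2, hB2, hC2, if_neg hj, osp_quad]
        ring
    calc ∫ y, (∑ j : Fin d, (M j / p j) *
          ((θ j - (p j / M j) * (if j ∈ U then (gradf θ j + y j) / p j else 0))
            - wstar j) ^ 2) ∂(gpi d s)
        = ∫ y, (∑ j : Fin d, osp_quad (A2 j) (B2 j) (C2 j) (y j)) ∂(gpi d s) := by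
          congr 1
          funext y
          exact hptw y
      _ = ∑ j : Fin d, (A2 j + C2 j * s ^ 2) := osp_integral_sum_quad s _ _ _
  -- notation for the noise sum
  set N : ℝ := ∑ U : Finset (Fin d), q U * ((σ U) ^ 2 * ∑ j ∈ U, 1 / (p j * M j)) with hN_def
  -- swap computations
  have hswapA : ∑ U : Finset (Fin d), q U *
      ∑ j : Fin d, (if j ∈ U then -(gradf θ j ^ 2 / (2 * M j)) else 0) = -(A / 2) := by
    rw [osp_swap_sum]
    have hA2' : A / 2 = ∑ j : Fin d,
        (∑ U : Finset (Fin d), if j ∈ U then q U else 0) * (gradf θ j ^ 2 / (2 * M j)) := by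
      rw [hA_def, Finset.sum_div]
      refine Finset.sum_congr rfl fun j _ => ?_
      rw [← hpdef j]
      field_simp
    rw [hA2', ← Finset.sum_neg_distrib]
    refine Finset.sum_congr rfl fun j _ => ?_
    ring
  have hswapX : ∑ U : Finset (Fin d), q U *
      ∑ j : Fin d, (if j ∈ U then -(2 * (θ j - wstar j) * gradf θ j / p j)
          + gradf θ j ^ 2 / (p j * M j) else 0) = -(2 * T) + B := by
    rw [osp_swap_sum]
    have step : ∀ j : Fin d, (∑ U : Finset (Fin d), if j ∈ U then q U else 0) *
        (-(2 * (θ j - wstar j) * gradf θ j / p j) + gradf θ j ^ 2 / (p j * M j))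
        = -(2 * (gradf θ j * (θ j - wstar j))) + gradf θ j ^ 2 / M j := by
      intro j
      rw [← hpdef j]
      field_simp [hp0 j, hM0 j]
    rw [Finset.sum_congr rfl fun j _ => step j]
    rw [Finset.sum_add_distrib, hT_def, hB_def, Finset.mul_sum, ← Finset.sum_neg_distrib]
  -- noise comparison
  have hNoise : ∑ U : Finset (Fin d), q U *
      ((σ U) ^ 2 * ∑ j : Fin d, (if j ∈ U then 1 / (2 * M j) else 0)) ≤ N / 2 := by
    rw [hN_def, Finset.sum_div]
    refine Finset.sum_le_sum fun U _ => ?_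
    have h1 : ∑ j : Fin d, (if j ∈ U then 1 / (2 * M j) else 0) = ∑ j ∈ U, 1 / (2 * M j) := by
      rw [Finset.sum_ite_mem, Finset.univ_inter]
    rw [h1]
    have h2 : ∑ j ∈ U, 1 / (2 * M j) ≤ (∑ j ∈ U, 1 / (p j * M j)) / 2 := by
      rw [Finset.sum_div]
      refine Finset.sum_le_sum fun j _ => ?_
      rw [div_div]
      refine one_div_le_one_div_of_le ?_ ?_
      · have := hp j; have := hM j; positivity
      · nlinarith [hp1 j, hM j, hp j]
    calc q U * ((σ U) ^ 2 * ∑ j ∈ U, 1 / (2 * M j))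
        ≤ q U * ((σ U) ^ 2 * ((∑ j ∈ U, 1 / (p j * M j)) / 2)) := by
          exact mul_le_mul_of_nonneg_left
            (mul_le_mul_of_nonneg_left h2 (sq_nonneg _)) (hq0 U)
      _ = q U * ((σ U) ^ 2 * ∑ j ∈ U, 1 / (p j * M j)) / 2 := by ring
  -- the expectation bound for the function values
  have hExp1 : Exp q σ (fun U y =>
      f (WithLp.toLp 2 (fun j => θ j - (p j / M j) * (if j ∈ U then (gradf θ j + y j) / p j else 0))))
      ≤ f θ - A / 2 + N / 2 := by
    simp only [Exp]
    have step1 : ∑ U : Finset (Fin d), q U * ∫ y,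
        f (WithLp.toLp 2 (fun j => θ j - (p j / M j) * (if j ∈ U then (gradf θ j + y j) / p j else 0)))
          ∂(gpi d (σ U))
        ≤ ∑ U : Finset (Fin d), q U * (f θ
          + ∑ j : Fin d, ((if j ∈ U then -(gradf θ j ^ 2 / (2 * M j)) else 0)
            + (if j ∈ U then 1 / (2 * M j) else 0) * (σ U) ^ 2)) :=
      Finset.sum_le_sum fun U _ => mul_le_mul_of_nonneg_left (hperU1 U) (hq0 U)
    refine step1.trans ?_
    have expand : ∀ U : Finset (Fin d), q U * (f θ
        + ∑ j : Fin d, ((if j ∈ U then -(gradf θ j ^ 2 / (2 * M j)) else 0)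
          + (if j ∈ U then 1 / (2 * M j) else 0) * (σ U) ^ 2))
        = q U * f θ
          + q U * ∑ j : Fin d, (if j ∈ U then -(gradf θ j ^ 2 / (2 * M j)) else 0)
          + q U * ((σ U) ^ 2 * ∑ j : Fin d, (if j ∈ U then 1 / (2 * M j) else 0)) := by
      intro U
      rw [Finset.sum_add_distrib, ← Finset.sum_mul]
      ring
    rw [Finset.sum_congr rfl fun U _ => expand U, Finset.sum_add_distrib,
      Finset.sum_add_distrib, ← Finset.sum_mul, hq1, one_mul, hswapA]
    linarith [hNoise]
  -- the exact expectation for the quadratic terms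
  have hExp2 : Exp q σ (fun U y => ∑ j : Fin d,
      (M j / p j) *
        ((θ j - (p j / M j) * (if j ∈ U then (gradf θ j + y j) / p j else 0))
          - wstar j) ^ 2)
      = (∑ j : Fin d, (M j / p j) * (θ j - wstar j) ^ 2) + (-(2 * T) + B) + N := by
    simp only [Exp]
    rw [Finset.sum_congr rfl fun U _ => by rw [hperU2 U]]
    have expand : ∀ U : Finset (Fin d), q U * ∑ j : Fin d,
        (((M j / p j) * (θ j - wstar j) ^ 2
          + (if j ∈ U then -(2 * (θ j - wstar j) * gradf θ j / p j)
              + gradf θ j ^ 2 / (p j * M j) else 0))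
          + (if j ∈ U then 1 / (p j * M j) else 0) * (σ U) ^ 2)
        = q U * (∑ j : Fin d, (M j / p j) * (θ j - wstar j) ^ 2)
          + q U * ∑ j : Fin d, (if j ∈ U then -(2 * (θ j - wstar j) * gradf θ j / p j)
              + gradf θ j ^ 2 / (p j * M j) else 0)
          + q U * ((σ U) ^ 2 * ∑ j ∈ U, 1 / (p j * M j)) := by
      intro U
      have h1 : ∑ j : Fin d, (if j ∈ U then 1 / (p j * M j) else 0)
          = ∑ j ∈ U, 1 / (p j * M j) := by
        rw [Finset.sum_ite_mem, Finset.univ_inter]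
      rw [Finset.sum_add_distrib, Finset.sum_add_distrib, ← Finset.sum_mul, h1]
      ring
    rw [Finset.sum_congr rfl fun U _ => expand U, Finset.sum_add_distrib,
      Finset.sum_add_distrib, ← Finset.sum_mul, hq1, one_mul, hswapX, ← hN_def]
  -- final algebra
  rw [hExp2]
  have hprod1 : 0 ≤ α * (T - B / 2 - (f θ - f wstar)) :=
    mul_nonneg hα.1.le (by linarith)
  have hprod2 : 0 ≤ α * (f θ - f wstar) := mul_nonneg hα.1.le hΔ_nonneg
  nlinarith [hExp1, hprod1, hprod2, hA_nonneg]
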